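/- Let Δ be a fan with exceptional ideal B(Δ) = (x^σ : σ ∈ Δ) in k[x_ρ : ρ ∈ Δ(1)], where x^σ = ∏_{ρ ∉ σ(1)} x_ρ. Then the irreducible components of Z(Δ) = V(B(Δ)) ⊆ 𝔸^{Δ(1)} are exactly the linear subspaces V((x_ρ)_{ρ ∈ C}) where C ranges over the primitive collections of Δ. -/

import Mathlib

open scoped Classical

/-- The convex cone generated by a set `S ⊆ ℝᵐ`. -/
def coneGen {m : ℕ} (S : Set (Fin m → ℝ)) : Set (Fin m → ℝ) :=
  {x | ∃ (t : Finset (Fin m → ℝ)) (c : (Fin m → ℝ) → ℝ),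
    ↑t ⊆ S ∧ (∀ y, 0 ≤ c y) ∧ x = ∑ y ∈ t, c y • y}

/-- `τ` is a face of the cone `σ`. -/
def IsFaceOf {m : ℕ} (τ σ : Set (Fin m → ℝ)) : Prop :=
  τ ⊆ σ ∧ (∀ x ∈ τ, ∀ y ∈ τ, x + y ∈ τ) ∧ (∀ x ∈ τ, ∀ c : ℝ, 0 ≤ c → c • x ∈ τ) ∧
    (∀ x ∈ σ, ∀ y ∈ σ, x + y ∈ τ → x ∈ τ ∧ y ∈ τ)

/-- The Zariski topology on affine space `𝔸^ι = (ι → k)`, generated by the complements of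
hypersurfaces. -/
def zariski (k ι : Type*) [CommRing k] : TopologicalSpace (ι → k) :=
  TopologicalSpace.generateFrom
    {U | ∃ p : MvPolynomial ι k, U = {x | MvPolynomial.eval x p ≠ 0}}

open MvPolynomial in
private lemma zariski_basic {k : Type*} [Field k] {ι : Type*}
    {U : Set (ι → k)} (hU : @IsOpen (ι → k) (zariski k ι) U) {x : ι → k} (hx : x ∈ U) :
    ∃ p : MvPolynomial ι k, eval x p ≠ 0 ∧ {y : ι → k | eval y p ≠ 0} ⊆ U := by
  have hU' : TopologicalSpace.GenerateOpen
      {U : Set (ι → k) | ∃ p : MvPolynomial ι k, U = {x | MvPolynomial.eval x p ≠ 0}} U := hU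
  clear hU
  induction hU' with
  | basic U hU => obtain ⟨p, rfl⟩ := hU; exact ⟨p, hx, fun y hy => hy⟩
  | univ => exact ⟨1, by simp, fun y _ => trivial⟩
  | inter U V hU hV ihU ihV =>
      obtain ⟨p, hp, hpU⟩ := ihU hx.1
      obtain ⟨q, hq, hqV⟩ := ihV hx.2
      refine ⟨p * q, by simp [hp, hq], fun y hy => ?_⟩
      simp only [Set.mem_setOf_eq, map_mul, mul_ne_zero_iff] at hy
      exact ⟨hpU hy.1, hqV hy.2⟩
  | sUnion S hS ih =>
      obtain ⟨s, hs, hxs⟩ := hx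
      obtain ⟨p, hp, hps⟩ := ih s hs hxs
      exact ⟨p, hp, fun y hy => ⟨s, hs, hps hy⟩⟩

open MvPolynomial in
private lemma eval_mask {k : Type*} [CommSemiring k] {ι : Type*} (C : Set ι)
    (p : MvPolynomial ι k) (z : ι → k) :
    eval z (aeval (fun i => if i ∈ C then 0 else X i) p)
      = eval (fun i => if i ∈ C then 0 else z i) p := by
  rw [aeval_def, MvPolynomial.algebraMap_eq, ← eval_assoc]
  have h : (⇑(eval z) ∘ fun i => if i ∈ C then 0 else X i)
      = fun i => if i ∈ C then 0 else z i := by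
    funext i; by_cases h : i ∈ C <;> simp [h]
  rw [h]

open MvPolynomial in
private lemma VC_closed {k : Type*} [CommRing k] {ι : Type*} (C : Set ι) :
    @IsClosed (ι → k) (zariski k ι) {x | ∀ i ∈ C, x i = 0} := by
  letI := zariski k ι
  have h : {x : ι → k | ∀ i ∈ C, x i = 0} = ⋂ i, ⋂ (_ : i ∈ C), {x : ι → k | x i = 0} := by
    ext x; simp
  rw [h]
  refine isClosed_iInter fun i => isClosed_iInter fun _ => ?_
  rw [← isOpen_compl_iff]
  exact TopologicalSpace.isOpen_generateFrom_of_mem ⟨X i, by ext x; simp⟩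


open MvPolynomial in
private lemma VC_irred {k : Type*} [Field k] [Infinite k] {ι : Type*} (C : Set ι) :
    @IsIrreducible (ι → k) (zariski k ι) {x | ∀ i ∈ C, x i = 0} := by
  letI := zariski k ι
  constructor
  · exact ⟨0, fun i _ => rfl⟩
  · rintro u v hu hv ⟨x, hxC, hxu⟩ ⟨y, hyC, hyv⟩
    obtain ⟨p, hp, hpu⟩ := zariski_basic hu hxu
    obtain ⟨q, hq, hqv⟩ := zariski_basic hv hyv
    set P := aeval (fun i => if i ∈ C then (0 : MvPolynomial ι k) else X i) p with hP
    set Q := aeval (fun i => if i ∈ C then (0 : MvPolynomial ι k) else X i) q with hQ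
    have hmx : (fun i => if i ∈ C then (0:k) else x i) = x := by
      funext i
      by_cases h : i ∈ C
      · simp [h, hxC i h]
      · simp [h]
    have hmy : (fun i => if i ∈ C then (0:k) else y i) = y := by
      funext i
      by_cases h : i ∈ C
      · simp [h, hyC i h]
      · simp [h]
    have hPne : P ≠ 0 := by
      intro h0
      apply hp
      have h1 := eval_mask C p x
      rw [← hP, h0, hmx] at h1
      simpa using h1.symm
    have hQne : Q ≠ 0 := by
      intro h0
      apply hq
      have h1 := eval_mask C q y
      rw [← hQ, h0, hmy] at h1
      simpa using h1.symm
    have hzex : ∃ z : ι → k, eval z (P * Q) ≠ 0 := by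
      by_contra hc
      push_neg at hc
      exact mul_ne_zero hPne hQne (MvPolynomial.funext fun z => by simp [hc z])
    obtain ⟨z, hz⟩ := hzex
    rw [map_mul, mul_ne_zero_iff] at hz
    refine ⟨fun i => if i ∈ C then 0 else z i, fun i hi => if_pos hi, ?_, ?_⟩
    · exact hpu (show eval (fun i => if i ∈ C then 0 else z i) p ≠ 0 by
        rw [← eval_mask]; exact hz.1)
    · exact hqv (show eval (fun i => if i ∈ C then 0 else z i) q ≠ 0 by
        rw [← eval_mask]; exact hz.2)

/-- Let `Δ` be a fan with ray generators `r i`, `i ∈ ι = Δ(1)`, and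
exceptional ideal `B(Δ) = (x^σ : σ ∈ Δ)` in `k[x_ρ : ρ ∈ Δ(1)]`, where
`x^σ = ∏_{ρ ∉ σ(1)} x_ρ`.  Then the irreducible components of
`Z(Δ) = V(B(Δ)) ⊆ 𝔸^{Δ(1)}` (i.e. the maximal irreducible Zariski-closed subsets of
`Z(Δ)`) are exactly the linear subspaces `V((x_ρ)_{ρ ∈ C})` where `C` ranges over the
primitive collections of `Δ`: the sets of rays not contained in any single cone of `Δ`,
every proper subset of which is contained in some cone of `Δ`. -/
theorem stmt_4 {k : Type*} [Field k] [IsAlgClosed k] {m : ℕ}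
    {ι : Type*} [Fintype ι] [DecidableEq ι]
    (Δ : Set (Set (Fin m → ℝ)))
    (r : ι → (Fin m → ℝ)) (hr : Function.Injective r) (hr0 : ∀ i, r i ≠ 0)
    (hfaces : ∀ σ ∈ Δ, ∀ τ, IsFaceOf τ σ → τ ∈ Δ)
    (hcone : ∀ σ ∈ Δ, σ = coneGen (r '' {i | r i ∈ σ}))
    (Z : Set (ι → k))
    (hZ : Z = {x | ∀ σ ∈ Δ, (∏ i ∈ Finset.univ.filter (fun i => r i ∉ σ), x i) = 0}) :
    letI := zariski k ι
    {Y : Set (ι → k) | Y ⊆ Z ∧ IsClosed Y ∧ IsIrreducible Y ∧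
        ∀ Y' : Set (ι → k), Y' ⊆ Z → IsClosed Y' → IsIrreducible Y' → Y ⊆ Y' → Y = Y'} =
      {Y | ∃ C : Set ι,
        (¬ ∃ σ ∈ Δ, ∀ i ∈ C, r i ∈ σ) ∧
        (∀ D ⊂ C, ∃ σ ∈ Δ, ∀ i ∈ D, r i ∈ σ) ∧
        Y = {x : ι → k | ∀ i ∈ C, x i = 0}} := by
  letI := zariski k ι
  have hZ' : ∀ x : ι → k, x ∈ Z ↔ ¬ ∃ σ ∈ Δ, ∀ i, x i = 0 → r i ∈ σ := by
    intro x
    rw [hZ]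
    simp only [Set.mem_setOf_eq]
    constructor
    · rintro h ⟨σ, hσ, hc⟩
      obtain ⟨i, hi, hxi⟩ := Finset.prod_eq_zero_iff.1 (h σ hσ)
      exact (Finset.mem_filter.1 hi).2 (hc i hxi)
    · intro h σ hσ
      rw [Finset.prod_eq_zero_iff]
      by_contra h2
      push_neg at h2
      exact h ⟨σ, hσ, fun i hxi => by
        by_contra hri
        exact h2 i (Finset.mem_filter.2 ⟨Finset.mem_univ _, hri⟩) hxi⟩
  set prim : Set ι → Prop := fun C =>
    (¬ ∃ σ ∈ Δ, ∀ i ∈ C, r i ∈ σ) ∧ (∀ D ⊂ C, ∃ σ ∈ Δ, ∀ i ∈ D, r i ∈ σ) with hprim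
  have hmin : ∀ C : Set ι, (¬ ∃ σ ∈ Δ, ∀ i ∈ C, r i ∈ σ) → ∃ C' ⊆ C, prim C' := by
    intro C hC
    obtain ⟨C', ⟨hsub, hnc⟩, hm⟩ := Set.Finite.exists_minimalFor id
      {D : Set ι | D ⊆ C ∧ ¬ ∃ σ ∈ Δ, ∀ i ∈ D, r i ∈ σ} (Set.toFinite _) ⟨C, subset_rfl, hC⟩
    refine ⟨C', hsub, hnc, fun D hD => ?_⟩
    by_contra hDc
    exact hD.2 (hm ⟨hD.subset.trans hsub, hDc⟩ hD.subset)
  have hVCZ : ∀ C : Set ι, (¬ ∃ σ ∈ Δ, ∀ i ∈ C, r i ∈ σ) →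
      {x : ι → k | ∀ i ∈ C, x i = 0} ⊆ Z := by
    intro C hC x hx
    rw [hZ' x]
    rintro ⟨σ, hσ, hc⟩
    exact hC ⟨σ, hσ, fun i hi => hc i (hx i hi)⟩
  have hcover : ∀ Y : Set (ι → k), Y ⊆ Z → IsIrreducible Y →
      ∃ C : Set ι, prim C ∧ Y ⊆ {x : ι → k | ∀ i ∈ C, x i = 0} := by
    intro Y hYZ hYirr
    have key := isIrreducible_iff_sUnion_isClosed.1 hYirr
      ((Finset.univ.filter prim).image fun C : Set ι => {x : ι → k | ∀ i ∈ C, x i = 0})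
      ?_ ?_
    · obtain ⟨z, hz, hYz⟩ := key
      obtain ⟨C, hC, rfl⟩ := Finset.mem_image.1 hz
      exact ⟨C, (Finset.mem_filter.1 hC).2, hYz⟩
    · rintro z hz
      obtain ⟨C, _, rfl⟩ := Finset.mem_image.1 hz
      exact VC_closed C
    · intro x hx
      have hxZ := hYZ hx
      rw [hZ' x] at hxZ
      obtain ⟨C', hC'sub, hC'prim⟩ := hmin {i | x i = 0}
        (fun hcon => hxZ (by obtain ⟨σ, hσ, hc⟩ := hcon; exact ⟨σ, hσ, fun i hi => hc i hi⟩))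
      refine ⟨{x' : ι → k | ∀ i ∈ C', x' i = 0}, ?_, fun i hi => hC'sub hi⟩
      exact Finset.mem_coe.2 (Finset.mem_image.2
        ⟨C', Finset.mem_filter.2 ⟨Finset.mem_univ _, hC'prim⟩, rfl⟩)
  have hVCsub : ∀ C C' : Set ι,
      {x : ι → k | ∀ i ∈ C, x i = 0} ⊆ {x : ι → k | ∀ i ∈ C', x i = 0} → C' ⊆ C := by
    intro C C' h i hi
    by_contra hiC
    have hx : (fun j => if j = i then (1:k) else 0) ∈ {x : ι → k | ∀ i ∈ C, x i = 0} := by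
      intro j hj
      by_cases e : j = i
      · subst e; exact absurd hj hiC
      · exact if_neg e
    have h1 := h hx i hi
    simp at h1
  have hprimeq : ∀ C C' : Set ι, prim C → prim C' → C ⊆ C' → C = C' := by
    intro C C' h1 h2 hsub
    rcases hsub.ssubset_or_eq with hss | he
    · exact absurd (h2.2 C hss) h1.1
    · exact he
  ext Y
  simp only [Set.mem_setOf_eq]
  constructor
  · rintro ⟨hYZ, _, hYirr, hYmax⟩
    obtain ⟨C, hpC, hYsub⟩ := hcover Y hYZ hYirr
    exact ⟨C, hpC.1, hpC.2, hYmax _ (hVCZ C hpC.1) (VC_closed C) (VC_irred C) hYsub⟩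
  · rintro ⟨C, h1, h2, rfl⟩
    refine ⟨hVCZ C h1, VC_closed C, VC_irred C,
      fun Y' hY'Z hY'cl hY'irr hsub => ?_⟩
    obtain ⟨C', hpC', hY'sub⟩ := hcover Y' hY'Z hY'irr
    have hCC' : C' ⊆ C := hVCsub C C' (hsub.trans hY'sub)
    have he : C' = C := hprimeq C' C hpC' ⟨h1, h2⟩ hCC'
    exact subset_antisymm hsub (he ▸ hY'sub)
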